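/- arXiv:2601.19772 — 5 statements merged into one kernel-verified Lean document; each statement's English description precedes it below -/
import Mathlib

section
/- For any category C, every word of morphisms has a unique normal form: for each word w there exists a unique word w' such that w →* w' and w' is a normal form. -/
open CategoryTheory

/-- A word of morphisms in a category `C`: a finite list of morphisms, each recorded
with its source and target. -/
abbrev CatWord (C : Type*) [Category C] : Type _ := List (Σ a b : C, a ⟶ b)

/-- The rewrite relation on words of morphisms: delete an identity entry, or replace
two adjacent composable entries `(f, g)` by the single entry `g ∘ f`. -/
inductive RwStep {C : Type*} [Category C] : CatWord C → CatWord C → Prop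
  | del (u v : CatWord C) (a : C) :
      RwStep (u ++ ⟨a, a, 𝟙 a⟩ :: v) (u ++ v)
  | comp (u v : CatWord C) {a b c : C} (f : a ⟶ b) (g : b ⟶ c) :
      RwStep (u ++ ⟨a, b, f⟩ :: ⟨b, c, g⟩ :: v) (u ++ ⟨a, c, f ≫ g⟩ :: v)


/-- A word is a normal form if no rewrite step applies to it. -/
def IsNormalForm {C : Type*} [Category C] (w : CatWord C) : Prop :=
  ∀ z : CatWord C, ¬ RwStep w z

section Aux

open scoped Classical

variable {C : Type*} [Category C]

/-- An entry is an identity. -/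
def EntIsId (p : Σ a b : C, a ⟶ b) : Prop := ∃ a, p = ⟨a, a, 𝟙 a⟩

/-- Composition of two composable entries. -/
def entComp (p q : Σ a b : C, a ⟶ b) (h : p.2.1 = q.1) : Σ a b : C, a ⟶ b :=
  ⟨p.1, q.2.1, p.2.2 ≫ eqToHom h ≫ q.2.2⟩

@[simp] lemma entComp_fst (p q : Σ a b : C, a ⟶ b) (h : p.2.1 = q.1) :
    (entComp p q h).1 = p.1 := rfl

@[simp] lemma entComp_snd_fst (p q : Σ a b : C, a ⟶ b) (h : p.2.1 = q.1) :
    (entComp p q h).2.1 = q.2.1 := rfl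

lemma entComp_id_right (p q : Σ a b : C, a ⟶ b) (h : p.2.1 = q.1) (hq : EntIsId q) :
    entComp p q h = p := by
  obtain ⟨b, rfl⟩ := hq
  obtain ⟨x, y, f⟩ := p
  dsimp at h
  subst h
  simp [entComp]

lemma entComp_id_left (p q : Σ a b : C, a ⟶ b) (h : p.2.1 = q.1) (hp : EntIsId p) :
    entComp p q h = q := by
  obtain ⟨a, rfl⟩ := hp
  obtain ⟨x, y, f⟩ := q
  dsimp at h
  subst h
  simp [entComp]

lemma entComp_assoc (p q r : Σ a b : C, a ⟶ b) (h1 : p.2.1 = q.1) (h2 : q.2.1 = r.1) :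
    entComp p (entComp q r h2) h1 = entComp (entComp p q h1) r h2 := by
  obtain ⟨a, b, f⟩ := p
  obtain ⟨x, c, g⟩ := q
  obtain ⟨y, d, e⟩ := r
  dsimp at h1 h2
  subst h1; subst h2
  simp [entComp]

/-- Insert an entry at the front of a word, performing possible reductions. -/
noncomputable def ins (p : Σ a b : C, a ⟶ b) : CatWord C → CatWord C
  | [] => if EntIsId p then [] else [p]
  | q :: t =>
    if h : p.2.1 = q.1 then ins (entComp p q h) t
    else if EntIsId p then q :: t else p :: q :: t

lemma ins_nil (p : Σ a b : C, a ⟶ b) :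
    ins p ([] : CatWord C) = if EntIsId p then [] else [p] := by rw [ins]

lemma ins_cons_comp {p q : Σ a b : C, a ⟶ b} (h : p.2.1 = q.1) (t : CatWord C) :
    ins p (q :: t) = ins (entComp p q h) t := by rw [ins]; rw [dif_pos h]

lemma ins_cons_id {p q : Σ a b : C, a ⟶ b} (h : ¬ p.2.1 = q.1) (hp : EntIsId p)
    (t : CatWord C) : ins p (q :: t) = q :: t := by rw [ins]; rw [dif_neg h, if_pos hp]

lemma ins_cons_ne {p q : Σ a b : C, a ⟶ b} (h : ¬ p.2.1 = q.1) (hp : ¬ EntIsId p)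
    (t : CatWord C) : ins p (q :: t) = p :: q :: t := by
  rw [ins]; rw [dif_neg h, if_neg hp]

/-- The normalization function. -/
noncomputable def normWord : CatWord C → CatWord C
  | [] => []
  | p :: t => ins p (normWord t)

/-- Structural characterization of normal forms. -/
def NF (l : CatWord C) : Prop :=
  (∀ p ∈ l, ¬ EntIsId p) ∧ l.Chain' (fun p q => p.2.1 ≠ q.1)

lemma NF.tail {p : Σ a b : C, a ⟶ b} {l : CatWord C} (h : NF (p :: l)) : NF l :=
  ⟨fun q hq => h.1 q (List.mem_cons_of_mem _ hq), h.2.tail⟩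

lemma ins_eq_cons {p : Σ a b : C, a ⟶ b} {l : CatWord C} (h : NF (p :: l)) :
    ins p l = p :: l := by
  have hp : ¬ EntIsId p := h.1 p List.mem_cons_self
  cases l with
  | nil => rw [ins_nil, if_neg hp]
  | cons q t =>
    have hc : p.2.1 ≠ q.1 := (List.isChain_cons_cons.mp h.2).1
    exact ins_cons_ne hc hp t

lemma normWord_fix {l : CatWord C} (h : NF l) : normWord l = l := by
  induction l with
  | nil => rfl
  | cons p t ih =>
    rw [normWord, ih h.tail, ins_eq_cons h]

lemma ins_id {a : C} {l : CatWord C} (h : NF l) :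
    ins (⟨a, a, 𝟙 a⟩ : Σ a b : C, a ⟶ b) l = l := by
  cases l with
  | nil => rw [ins_nil, if_pos ⟨a, rfl⟩]
  | cons q t =>
    by_cases hc : (⟨a, a, 𝟙 a⟩ : Σ a b : C, a ⟶ b).2.1 = q.1
    · rw [ins_cons_comp hc, entComp_id_left _ _ _ ⟨a, rfl⟩, ins_eq_cons h]
    · exact ins_cons_id hc ⟨a, rfl⟩ t

lemma ins_ins (l : CatWord C) (p q : Σ a b : C, a ⟶ b) (h : p.2.1 = q.1) :
    ins p (ins q l) = ins (entComp p q h) l := by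
  induction l generalizing p q with
  | nil =>
    by_cases hq : EntIsId q
    · rw [ins_nil, if_pos hq, entComp_id_right _ _ _ hq]
    · rw [ins_nil, if_neg hq, ins_cons_comp h, ins_nil]
  | cons r t ih =>
    by_cases h2 : q.2.1 = r.1
    · rw [ins_cons_comp h2, ih p (entComp q r h2) h,
        ins_cons_comp (show (entComp p q h).2.1 = r.1 from h2), entComp_assoc]
    · by_cases hq : EntIsId q
      · rw [ins_cons_id h2 hq, entComp_id_right _ _ _ hq]
      · rw [ins_cons_ne h2 hq, ins_cons_comp h]

lemma ins_NF {l : CatWord C} (hl : NF l) (p : Σ a b : C, a ⟶ b) : NF (ins p l) := by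
  induction l generalizing p with
  | nil =>
    by_cases hp : EntIsId p
    · rw [ins_nil, if_pos hp]; exact ⟨fun x hx => absurd hx List.not_mem_nil, List.IsChain.nil⟩
    · rw [ins_nil, if_neg hp]
      exact ⟨by simpa using hp, List.isChain_singleton p⟩
  | cons r t ih =>
    by_cases h : p.2.1 = r.1
    · rw [ins_cons_comp h]
      exact ih hl.tail _
    · by_cases hp : EntIsId p
      · rw [ins_cons_id h hp]; exact hl
      · rw [ins_cons_ne h hp]
        refine ⟨?_, List.isChain_cons_cons.mpr ⟨h, hl.2⟩⟩
        intro x hx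
        rcases List.mem_cons.mp hx with rfl | hx
        · exact hp
        · exact hl.1 x hx

lemma normWord_NF (l : CatWord C) : NF (normWord l) := by
  induction l with
  | nil => exact ⟨fun x hx => absurd hx List.not_mem_nil, List.IsChain.nil⟩
  | cons p t ih => exact ins_NF ih p

lemma RwStep.cons {l l' : CatWord C} (p : Σ a b : C, a ⟶ b) (h : RwStep l l') :
    RwStep (p :: l) (p :: l') := by
  cases h with
  | del u v a => simpa using RwStep.del (p :: u) v a
  | comp u v f g => simpa using RwStep.comp (p :: u) v f g

lemma rtg_cons {l l' : CatWord C} (p : Σ a b : C, a ⟶ b)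
    (h : Relation.ReflTransGen RwStep l l') :
    Relation.ReflTransGen RwStep (p :: l) (p :: l') := by
  induction h with
  | refl => exact Relation.ReflTransGen.refl
  | tail _ hstep ih => exact ih.tail (hstep.cons p)

lemma step_comp (p q : Σ a b : C, a ⟶ b) (h : p.2.1 = q.1) (t : CatWord C) :
    RwStep (p :: q :: t) (entComp p q h :: t) := by
  obtain ⟨a, b, f⟩ := p
  obtain ⟨x, c, g⟩ := q
  dsimp at h; subst h
  have e : entComp (⟨a, b, f⟩ : Σ a b : C, a ⟶ b) ⟨b, c, g⟩ rfl
      = ⟨a, c, f ≫ g⟩ := by simp [entComp]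
  rw [e]
  simpa using RwStep.comp ([] : CatWord C) t f g

lemma reach_ins {l : CatWord C} (hl : NF l) (p : Σ a b : C, a ⟶ b) :
    Relation.ReflTransGen RwStep (p :: l) (ins p l) := by
  induction l generalizing p with
  | nil =>
    by_cases hp : EntIsId p
    · obtain ⟨a, rfl⟩ := hp
      rw [ins_nil, if_pos ⟨a, rfl⟩]
      exact Relation.ReflTransGen.single (by simpa using RwStep.del ([] : CatWord C) [] a)
    · rw [ins_nil, if_neg hp]
  | cons r t ih =>
    by_cases h : p.2.1 = r.1
    · rw [ins_cons_comp h]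
      exact Relation.ReflTransGen.head (step_comp p r h t) (ih hl.tail _)
    · by_cases hp : EntIsId p
      · rw [ins_cons_id h hp]
        obtain ⟨a, rfl⟩ := hp
        exact Relation.ReflTransGen.single
          (by simpa using RwStep.del ([] : CatWord C) (r :: t) a)
      · rw [ins_cons_ne h hp]

lemma reach_normWord (w : CatWord C) : Relation.ReflTransGen RwStep w (normWord w) := by
  induction w with
  | nil => exact Relation.ReflTransGen.refl
  | cons p t ih =>
    exact (rtg_cons p ih).trans (reach_ins (normWord_NF t) p)

lemma normWord_append_del (u v : CatWord C) (a : C) :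
    normWord (u ++ ⟨a, a, 𝟙 a⟩ :: v) = normWord (u ++ v) := by
  induction u with
  | nil => simp only [List.nil_append, normWord]; exact ins_id (normWord_NF v)
  | cons p t ih =>
    rw [List.cons_append, List.cons_append, normWord, normWord]
    exact congrArg _ ih

lemma normWord_append_comp (u v : CatWord C) {a b c : C} (f : a ⟶ b) (g : b ⟶ c) :
    normWord (u ++ ⟨a, b, f⟩ :: ⟨b, c, g⟩ :: v) = normWord (u ++ ⟨a, c, f ≫ g⟩ :: v) := by
  induction u with
  | nil =>
    simp only [List.nil_append, normWord]
    rw [ins_ins (normWord v) _ _ rfl]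
    congr 1
    simp [entComp]
  | cons p t ih =>
    rw [List.cons_append, List.cons_append, normWord, normWord]
    exact congrArg _ ih

lemma normWord_step {w z : CatWord C} (h : RwStep w z) : normWord w = normWord z := by
  cases h with
  | del u v a => exact normWord_append_del u v a
  | comp u v f g => exact normWord_append_comp u v f g

lemma normWord_rtg {w z : CatWord C} (h : Relation.ReflTransGen RwStep w z) :
    normWord w = normWord z := by
  induction h with
  | refl => rfl
  | tail _ hstep ih => exact ih.trans (normWord_step hstep)

lemma NF.isNormalForm {l : CatWord C} (h : NF l) : IsNormalForm l := by
  intro z hz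
  cases hz with
  | del u v a =>
    exact h.1 ⟨a, a, 𝟙 a⟩ (by simp) ⟨a, rfl⟩
  | comp u v f g =>
    have hc := (List.isChain_append.mp h.2).2.1
    exact (List.isChain_cons_cons.mp hc).1 rfl

lemma IsNormalForm.nf {l : CatWord C} (h : IsNormalForm l) : NF l := by
  induction l with
  | nil => exact ⟨fun x hx => absurd hx List.not_mem_nil, List.IsChain.nil⟩
  | cons p t ih =>
    have ht : IsNormalForm t := fun z hz => h (p :: z) (hz.cons p)
    have hnt := ih ht
    have hp : ¬ EntIsId p := by
      rintro ⟨a, rfl⟩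
      exact h t (by simpa using RwStep.del ([] : CatWord C) t a)
    refine ⟨?_, ?_⟩
    · intro x hx
      rcases List.mem_cons.mp hx with rfl | hx
      · exact hp
      · exact hnt.1 x hx
    · cases t with
      | nil => exact List.isChain_singleton p
      | cons q s =>
        refine List.isChain_cons_cons.mpr ⟨?_, hnt.2⟩
        intro hc
        exact h _ (step_comp p q hc s)

end Aux

/-- Every word of morphisms has a unique normal form. -/
theorem exists_unique_normal_form (C : Type*) [Category C] (w : CatWord C) :
    ∃! w' : CatWord C, Relation.ReflTransGen RwStep w w' ∧ IsNormalForm w' := by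
  refine ⟨normWord w, ⟨reach_normWord w, (normWord_NF w).isNormalForm⟩, ?_⟩
  rintro w' ⟨hr, hnf⟩
  have h1 : normWord w = normWord w' := normWord_rtg hr
  rw [← normWord_fix hnf.nf, ← h1]
end

section
/- For any category C, the set M(C) of normal-form words with multiplication x • y := nf(y ++ x) is a monoid: the operation • is associative and the empty word is a two-sided identity. -/
open CategoryTheory

namespace CatWordAux

variable {C : Type*} [Category C]

/-- non-identity entry -/
abbrev NonId (e : Σ a b : C, a ⟶ b) : Prop := e ≠ ⟨e.1, e.1, 𝟙 e.1⟩

/-- non-composable adjacent pair -/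
abbrev NC (e e' : Σ a b : C, a ⟶ b) : Prop := e.2.1 ≠ e'.1

/-- structural normal form predicate -/
def Nf (w : CatWord C) : Prop := (∀ e ∈ w, NonId e) ∧ w.Chain' NC

open Classical in
/-- smart cons: push an entry onto a word, normalizing. -/
noncomputable def cons' : (Σ a b : C, a ⟶ b) → CatWord C → CatWord C
  | e, [] => if e = ⟨e.1, e.1, 𝟙 e.1⟩ then [] else [e]
  | e, e' :: w =>
      if e = ⟨e.1, e.1, 𝟙 e.1⟩ then e' :: w
      else if h : e.2.1 = e'.1 then
        cons' ⟨e.1, e'.2.1, e.2.2 ≫ eqToHom h ≫ e'.2.2⟩ w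
      else e :: e' :: w

lemma cons'_id (a : C) (w : CatWord C) : cons' ⟨a, a, 𝟙 a⟩ w = w := by
  cases w <;> simp [cons']

lemma cons'_nil {e : Σ a b : C, a ⟶ b} (h : NonId e) : cons' e [] = [e] := by
  simp only [cons', if_neg h]

lemma cons'_cons_comp {e e' : Σ a b : C, a ⟶ b} (h : NonId e) (hc : e.2.1 = e'.1)
    (w : CatWord C) :
    cons' e (e' :: w) = cons' ⟨e.1, e'.2.1, e.2.2 ≫ eqToHom hc ≫ e'.2.2⟩ w := by
  simp only [cons', if_neg h, dif_pos hc]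

lemma cons'_cons_nc {e e' : Σ a b : C, a ⟶ b} (h : NonId e) (hc : NC e e')
    (w : CatWord C) : cons' e (e' :: w) = e :: e' :: w := by
  simp only [cons', if_neg h, dif_neg hc]

lemma nonId_or (e : Σ a b : C, a ⟶ b) :
    NonId e ∨ ∃ a : C, e = ⟨a, a, 𝟙 a⟩ := by
  by_cases h : e = ⟨e.1, e.1, 𝟙 e.1⟩
  · exact Or.inr ⟨e.1, h⟩
  · exact Or.inl h

lemma cons'_of_nf {e : Σ a b : C, a ⟶ b} {w : CatWord C} (h : Nf (e :: w)) :
    cons' e w = e :: w := by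
  have he : NonId e := h.1 e (by simp)
  cases w with
  | nil => exact cons'_nil he
  | cons e' w' =>
      have : NC e e' := (List.isChain_cons_cons.mp h.2).1
      exact cons'_cons_nc he this w'

lemma nf_tail {e : Σ a b : C, a ⟶ b} {w : CatWord C} (h : Nf (e :: w)) : Nf w :=
  ⟨fun x hx => h.1 x (by simp [hx]), h.2.tail⟩

lemma nf_cons' (e : Σ a b : C, a ⟶ b) {w : CatWord C} (hw : Nf w) : Nf (cons' e w) := by
  induction w generalizing e with
  | nil =>
      rcases nonId_or e with h | ⟨a, ha⟩
      · rw [cons'_nil h]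
        exact ⟨by simpa using h, List.isChain_singleton _⟩
      · rw [ha, cons'_id]
        exact hw
  | cons e' w' ih =>
      rcases nonId_or e with h | ⟨a, ha⟩
      · by_cases hc : e.2.1 = e'.1
        · rw [cons'_cons_comp h hc]
          exact ih _ (nf_tail hw)
        · rw [cons'_cons_nc h hc]
          refine ⟨?_, List.isChain_cons_cons.mpr ⟨hc, hw.2⟩⟩
          intro x hx
          rcases List.mem_cons.mp hx with rfl | hx'
          · exact h
          · exact hw.1 x hx'
      · rw [ha, cons'_id]
        exact hw

/-- the key local-confluence style lemma -/
lemma cons'_cons' {w : CatWord C} (hw : Nf w) {a b c : C} (f : a ⟶ b) (g : b ⟶ c) :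
    cons' ⟨a, b, f⟩ (cons' ⟨b, c, g⟩ w) = cons' ⟨a, c, f ≫ g⟩ w := by
  induction w generalizing a b c f g with
  | nil =>
      rcases nonId_or (⟨b, c, g⟩ : Σ a b : C, a ⟶ b) with hg | ⟨x, hg⟩
      · rcases nonId_or (⟨a, b, f⟩ : Σ a b : C, a ⟶ b) with hf | ⟨x, hf⟩
        · rw [cons'_nil hg, cons'_cons_comp hf rfl]
          simp
        · injection hf with h1 h2
          subst h1
          injection h2 with h3 h4
          subst h3
          rw [eq_of_heq h4, cons'_id]
          simp
      · injection hg with h1 h2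
        subst h1
        injection h2 with h3 h4
        subst h3
        rw [eq_of_heq h4, cons'_id]
        simp
  | cons e' w' ih =>
      obtain ⟨p, q, m⟩ := e'
      rcases nonId_or (⟨b, c, g⟩ : Σ a b : C, a ⟶ b) with hg | ⟨x, hg⟩
      · rcases nonId_or (⟨a, b, f⟩ : Σ a b : C, a ⟶ b) with hf | ⟨x, hf⟩
        · by_cases hc : c = p
          · subst hc
            rw [cons'_cons_comp hg rfl]
            simp only [eqToHom_refl, Category.id_comp]
            rw [ih (nf_tail hw)]
            rcases nonId_or (⟨a, c, f ≫ g⟩ : Σ a b : C, a ⟶ b) with hfg | ⟨x, hfg⟩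
            · rw [cons'_cons_comp hfg rfl]
              simp
            · -- f ≫ g is an identity, so a = c
              injection hfg with h1 h2
              subst h1
              injection h2 with h3 h4
              subst h3
              have hfg' := eq_of_heq h4
              have h5 : f ≫ g ≫ m = m := by
                rw [← Category.assoc, hfg', Category.id_comp]
              rw [h5, hfg', cons'_id]
              exact cons'_of_nf hw
          · rw [cons'_cons_nc hg hc, cons'_cons_comp hf rfl]
            simp
        · injection hf with h1 h2
          subst h1
          injection h2 with h3 h4
          subst h3
          rw [eq_of_heq h4, cons'_id]
          simp
      · injection hg with h1 h2
        subst h1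
        injection h2 with h3 h4
        subst h3
        rw [eq_of_heq h4, cons'_id]
        simp

/-- evaluation / normalization function -/
noncomputable def eval (w : CatWord C) : CatWord C := w.foldr cons' []

lemma nf_nil : Nf ([] : CatWord C) := ⟨by simp, List.isChain_nil⟩

lemma nf_foldr {v : CatWord C} (hv : Nf v) (u : CatWord C) : Nf (u.foldr cons' v) := by
  induction u with
  | nil => exact hv
  | cons e u ih => exact nf_cons' e ih

lemma nf_eval (w : CatWord C) : Nf (eval w) := nf_foldr nf_nil w

lemma eval_of_nf {w : CatWord C} (h : Nf w) : eval w = w := by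
  induction w with
  | nil => rfl
  | cons e w ih =>
      have h1 : eval (e :: w) = cons' e (eval w) := rfl
      rw [h1, ih (nf_tail h), cons'_of_nf h]

lemma foldr_cons' {m v : CatWord C} (hm : Nf m) (hv : Nf v) (e : Σ a b : C, a ⟶ b) :
    (cons' e m).foldr cons' v = cons' e (m.foldr cons' v) := by
  induction m generalizing e with
  | nil =>
      rcases nonId_or e with h | ⟨a, ha⟩
      · rw [cons'_nil h]; rfl
      · rw [ha, cons'_id, cons'_id]
  | cons e' m' ih =>
      rcases nonId_or e with h | ⟨a, ha⟩
      · by_cases hc : e.2.1 = e'.1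
        · rw [cons'_cons_comp h hc, ih (nf_tail hm)]
          show _ = cons' e (cons' e' (m'.foldr cons' v))
          obtain ⟨x, y, f⟩ := e
          obtain ⟨x', y', g⟩ := e'
          simp only at hc
          subst hc
          rw [cons'_cons' (nf_foldr hv m') f g]
          simp
        · rw [cons'_cons_nc h hc]; rfl
      · rw [ha, cons'_id, cons'_id]

lemma eval_foldr {v : CatWord C} (hv : Nf v) (w : CatWord C) :
    (eval w).foldr cons' v = w.foldr cons' v := by
  induction w with
  | nil => rfl
  | cons e w ih =>
      show (cons' e (eval w)).foldr cons' v = cons' e (w.foldr cons' v)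
      rw [foldr_cons' (nf_eval w) hv, ih]

lemma eval_append (u v : CatWord C) : eval (u ++ v) = u.foldr cons' (eval v) := by
  simp [eval, List.foldr_append]

lemma eval_step {w z : CatWord C} (h : RwStep w z) : eval w = eval z := by
  cases h with
  | del u v a =>
      rw [eval_append, eval_append]
      congr 1
      show cons' ⟨a, a, 𝟙 a⟩ (eval v) = eval v
      rw [cons'_id]
  | comp u v f g =>
      rw [eval_append, eval_append]
      congr 1
      show cons' _ (cons' _ (eval v)) = cons' _ (eval v)
      rw [cons'_cons' (nf_eval v)]

lemma eval_rtg {w z : CatWord C} (h : Relation.ReflTransGen RwStep w z) :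
    eval w = eval z := by
  induction h with
  | refl => rfl
  | tail _ hstep ih => rw [ih, eval_step hstep]

lemma step_cons {w z : CatWord C} (e : Σ a b : C, a ⟶ b) (h : RwStep w z) :
    RwStep (e :: w) (e :: z) := by
  cases h with
  | del u v a => exact RwStep.del (e :: u) v a
  | comp u v f g => exact RwStep.comp (e :: u) v f g

lemma isNF_nf {w : CatWord C} (h : IsNormalForm w) : Nf w := by
  induction w with
  | nil => exact nf_nil
  | cons e w ih =>
      have hw : IsNormalForm w := fun z hz => h (e :: z) (step_cons e hz)
      have hnfw := ih hw
      have he : NonId e := by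
        intro habs
        rw [habs] at h
        exact h w (RwStep.del [] w e.1)
      refine ⟨?_, ?_⟩
      · intro x hx
        rcases List.mem_cons.mp hx with rfl | hx'
        · exact he
        · exact hnfw.1 x hx'
      · cases w with
        | nil => exact List.isChain_singleton _
        | cons e' w' =>
            refine List.isChain_cons_cons.mpr ⟨?_, hnfw.2⟩
            intro hc
            obtain ⟨x, y, f⟩ := e
            obtain ⟨x', y', g⟩ := e'
            simp only at hc
            subst hc
            exact h _ (RwStep.comp [] w' f g)

end CatWordAux

open CatWordAux in
/-- The set `M(C)` of normal-form words, with multiplication `x • y := nf (y ++ x)`, is a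
monoid: the multiplication is associative on normal forms and the empty word is a
two-sided identity.  Here `nf` is any function assigning to each word its (unique)
normal form. -/
theorem normal_forms_monoid (C : Type*) [Category C] (nf : CatWord C → CatWord C)
    (hnf : ∀ w : CatWord C, Relation.ReflTransGen RwStep w (nf w) ∧ IsNormalForm (nf w)) :
    (∀ x y z : CatWord C, IsNormalForm x → IsNormalForm y → IsNormalForm z →
      -- `(x • y) • z = x • (y • z)` where `x • y := nf (y ++ x)`
      nf (z ++ nf (y ++ x)) = nf (nf (z ++ y) ++ x)) ∧
    (∀ x : CatWord C, IsNormalForm x →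
      -- `x • [] = x = [] • x`
      nf ([] ++ x) = x ∧ nf (x ++ []) = x) := by
  have key : ∀ w : CatWord C, nf w = eval w := by
    intro w
    have h1 := (hnf w).1
    have h2 := isNF_nf (hnf w).2
    rw [← eval_of_nf h2]
    exact (eval_rtg h1).symm
  constructor
  · intro x y z _ _ _
    rw [key, key, key, key]
    calc eval (z ++ eval (y ++ x))
        = z.foldr cons' (eval (eval (y ++ x))) := eval_append _ _
      _ = z.foldr cons' (eval (y ++ x)) := by rw [eval_of_nf (nf_eval _)]
      _ = eval (z ++ (y ++ x)) := (eval_append _ _).symm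
      _ = eval ((z ++ y) ++ x) := by rw [List.append_assoc]
      _ = (z ++ y).foldr cons' (eval x) := eval_append _ _
      _ = (eval (z ++ y)).foldr cons' (eval x) := (eval_foldr (nf_eval x) _).symm
      _ = eval (eval (z ++ y) ++ x) := (eval_append _ _).symm
  · intro x hx
    have hx' : eval x = x := eval_of_nf (isNF_nf hx)
    constructor
    · rw [List.nil_append, key, hx']
    · rw [List.append_nil, key, hx']
end

section
/- For any category C, the assignment sending a morphism f to nf([f]) defines a functor from C to the monoid M(C) (viewed as a one-object category): every identity morphism of C is sent to the empty word, and for composable morphisms f : a ⟶ b and g : b ⟶ c one has nf([g ∘ f]) = nf([g]) • nf([f]). -/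
open CategoryTheory

section Aux

variable {C : Type*} [Category C]

lemma step_cases {w z : CatWord C} (h : RwStep w z) :
    (∃ (u v : CatWord C) (a : C), w = u ++ ⟨a, a, 𝟙 a⟩ :: v ∧ z = u ++ v) ∨
    (∃ (u v : CatWord C) (a b c : C) (f : a ⟶ b) (g : b ⟶ c),
      w = u ++ ⟨a, b, f⟩ :: ⟨b, c, g⟩ :: v ∧ z = u ++ ⟨a, c, f ≫ g⟩ :: v) := by
  cases h with
  | del u v a => exact Or.inl ⟨u, v, a, rfl, rfl⟩
  | comp u v f g => exact Or.inr ⟨u, v, _, _, _, f, g, rfl, rfl⟩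

lemma no_step_nil (z : CatWord C) : ¬ RwStep ([] : CatWord C) z := by
  intro h
  rcases step_cases h with ⟨u, v, a, hw, -⟩ | ⟨u, v, a, b, c, f, g, hw, -⟩ <;>
    simp at hw

lemma step_singleton {x : Σ a b : C, a ⟶ b} {z : CatWord C}
    (h : RwStep [x] z) : z = [] ∧ ∃ a : C, x = ⟨a, a, 𝟙 a⟩ := by
  rcases step_cases h with ⟨u, v, a, hw, hz⟩ | ⟨u, v, a, b, c, f, g, hw, -⟩
  · rcases u with _ | ⟨y, u⟩
    · simp_all
    · simp_all
  · rcases u with _ | ⟨y, u⟩ <;> simp_all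

lemma nf_of_normal_reach {w n : CatWord C} (hw : IsNormalForm w)
    (h : Relation.ReflTransGen RwStep w n) : n = w := by
  rcases Relation.ReflTransGen.cases_head h with rfl | ⟨z, hz, _⟩
  · rfl
  · exact absurd hz (hw z)

lemma reach_singleton {x : Σ a b : C, a ⟶ b} {n : CatWord C}
    (h : Relation.ReflTransGen RwStep [x] n) : n = [x] ∨ n = [] := by
  rcases Relation.ReflTransGen.cases_head h with rfl | ⟨z, hz, h2⟩
  · exact Or.inl rfl
  · obtain ⟨rfl, -⟩ := step_singleton hz
    right
    rcases Relation.ReflTransGen.cases_head h2 with rfl | ⟨z', hz', -⟩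
    · rfl
    · exact absurd hz' (no_step_nil z')

lemma step_pair {x y : Σ a b : C, a ⟶ b} {z : CatWord C}
    (h : RwStep [x, y] z) :
    (∃ a : C, x = ⟨a, a, 𝟙 a⟩ ∧ z = [y]) ∨
    (∃ a : C, y = ⟨a, a, 𝟙 a⟩ ∧ z = [x]) ∨
    (∃ (a b c : C) (f : a ⟶ b) (g : b ⟶ c),
      x = ⟨a, b, f⟩ ∧ y = ⟨b, c, g⟩ ∧ z = [⟨a, c, f ≫ g⟩]) := by
  rcases step_cases h with ⟨u, v, a, hw, hz⟩ | ⟨u, v, a, b, c, f, g, hw, hz⟩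
  · rcases u with _ | ⟨p, u⟩
    · left
      simp_all
    · rcases u with _ | ⟨q, u⟩
      · right; left
        simp_all
      · rcases u with _ | ⟨r, u⟩ <;> simp_all
  · rcases u with _ | ⟨p, u⟩
    · right; right
      obtain ⟨hx, hy, rfl⟩ : x = ⟨a, b, f⟩ ∧ y = ⟨b, c, g⟩ ∧ v = [] := by
        simpa using hw
      exact ⟨a, b, c, f, g, hx, hy, by simpa using hz⟩
    · rcases u with _ | ⟨q, u⟩ <;> simp_all

end Aux

/-- Sending a morphism `f` to `nf [f]` defines a functor from `C` to the monoid `M(C)`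
of normal forms with multiplication `x • y := nf (y ++ x)`: identities go to the empty
word, and `nf [g ∘ f] = nf [g] • nf [f] = nf (nf [f] ++ nf [g])` for composable `f, g`.
Here `nf` is any function assigning to each word its (unique) normal form. -/
theorem nf_functorial (C : Type*) [Category C] (nf : CatWord C → CatWord C)
    (hnf : ∀ w : CatWord C, Relation.ReflTransGen RwStep w (nf w) ∧ IsNormalForm (nf w)) :
    (∀ a : C, nf [⟨a, a, 𝟙 a⟩] = []) ∧
    (∀ (a b c : C) (f : a ⟶ b) (g : b ⟶ c),
      -- `nf [g ∘ f] = nf [g] • nf [f]` where `x • y := nf (y ++ x)`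
      nf [⟨a, c, f ≫ g⟩] = nf (nf [⟨a, b, f⟩] ++ nf [⟨b, c, g⟩])) := by
  have hid : ∀ a : C, nf [⟨a, a, 𝟙 a⟩] = [] := by
    intro a
    obtain ⟨hr, hn⟩ := hnf [⟨a, a, 𝟙 a⟩]
    rcases reach_singleton hr with h | h
    · exfalso
      exact hn _ (h ▸ RwStep.del [] [] a)
    · exact h
  refine ⟨hid, fun a b c f g => ?_⟩
  obtain ⟨hrf, hnF⟩ := hnf [⟨a, b, f⟩]
  obtain ⟨hrg, hnG⟩ := hnf [⟨b, c, g⟩]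
  rcases reach_singleton hrf with hf | hf
  · rcases reach_singleton hrg with hg | hg
    · -- both normal singletons
      rw [hf, hg]
      simp only [List.cons_append, List.nil_append]
      have hxid : ∀ p : C, (⟨a, b, f⟩ : Σ a b : C, a ⟶ b) ≠ ⟨p, p, 𝟙 p⟩ := by
        intro p hp
        rw [hf] at hnF
        exact hnF [] (hp ▸ RwStep.del [] [] p)
      have hyid : ∀ p : C, (⟨b, c, g⟩ : Σ a b : C, a ⟶ b) ≠ ⟨p, p, 𝟙 p⟩ := by
        intro p hp
        rw [hg] at hnG
        exact hnG [] (hp ▸ RwStep.del [] [] p)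
      obtain ⟨hrp, hnp⟩ := hnf [⟨a, b, f⟩, ⟨b, c, g⟩]
      obtain ⟨hrc, hnc⟩ := hnf [⟨a, c, f ≫ g⟩]
      have hreach : Relation.ReflTransGen RwStep [⟨a, c, f ≫ g⟩]
          (nf [⟨a, b, f⟩, ⟨b, c, g⟩]) := by
        rcases Relation.ReflTransGen.cases_head hrp with h | ⟨z, hz, h2⟩
        · exfalso
          exact hnp _ (h ▸ RwStep.comp [] [] f g)
        · rcases step_pair hz with ⟨p, hp, -⟩ | ⟨p, hp, -⟩ | ⟨p, q, r, f', g', h1, h2', rfl⟩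
          · exact absurd hp (hxid p)
          · exact absurd hp (hyid p)
          · obtain ⟨rfl, h1⟩ := Sigma.mk.inj_iff.mp h1
            obtain ⟨rfl, h1⟩ := Sigma.mk.inj_iff.mp (eq_of_heq h1)
            obtain ⟨-, h2'⟩ := Sigma.mk.inj_iff.mp h2'
            obtain ⟨rfl, h2'⟩ := Sigma.mk.inj_iff.mp (eq_of_heq h2')
            rw [← eq_of_heq h1, ← eq_of_heq h2'] at h2
            exact h2
      rcases reach_singleton hreach with h | h
      · rcases reach_singleton hrc with h' | h'
        · rw [h, h']
        · exfalso
          rw [h'] at hrc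
          rcases Relation.ReflTransGen.cases_head hrc with h'' | ⟨z, hz, -⟩
          · simp at h''
          · exact (h ▸ hnp) z hz
      · rcases reach_singleton hrc with h' | h'
        · exfalso
          rw [h] at hreach
          rcases Relation.ReflTransGen.cases_head hreach with h'' | ⟨z, hz, -⟩
          · simp at h''
          · exact (h' ▸ hnc) z hz
        · rw [h, h']
    · -- g rewrites to [], so g is an identity entry
      rcases Relation.ReflTransGen.cases_head hrg with h | ⟨z, hz, -⟩
      · rw [hg] at h; simp at h
      · obtain ⟨-, p, hp⟩ := step_singleton hz
        obtain ⟨rfl, hp⟩ := Sigma.mk.inj_iff.mp hp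
        obtain ⟨rfl, hp⟩ := Sigma.mk.inj_iff.mp (eq_of_heq hp)
        rw [eq_of_heq hp, hid]
        simp only [List.append_nil, Category.comp_id]
        exact (nf_of_normal_reach hnF (hnf _).1).symm
  · -- f rewrites to [], so f is an identity entry
    rcases Relation.ReflTransGen.cases_head hrf with h | ⟨z, hz, -⟩
    · rw [hf] at h; simp at h
    · obtain ⟨-, p, hp⟩ := step_singleton hz
      obtain ⟨rfl, hp⟩ := Sigma.mk.inj_iff.mp hp
      obtain ⟨rfl, hp⟩ := Sigma.mk.inj_iff.mp (eq_of_heq hp)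
      rw [eq_of_heq hp, hid]
      simp only [List.nil_append, Category.id_comp]
      exact (nf_of_normal_reach hnG (hnf _).1).symm
end

section
/- (One Mountain Theorem.) Let M be a partial group and f, g ∈ M. If the singleton words [f] and [g] are related by the equivalence relation on nonempty words generated by the single-contraction relation ⇝, then there exists a nonempty word w ∈ List M with w ⇝* [f] and w ⇝* [g]. -/
/-- A partial group in Chermak's sense: a nonempty set `M` with a domain `D` of words
containing all words of length at most `1`, a product `Π` (here `pi`, given as a total
function whose axioms only concern words in `D`), and an involution `inv`. -/
structure PartialGroup (M : Type u) where
  /-- The underlying set is nonempty. -/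
  nonempty : Nonempty M
  /-- The set of words on which the product is defined. -/
  D : Set (List M)
  /-- The product `Π : D → M` (extended arbitrarily to all words). -/
  pi : List M → M
  /-- The inversion `x ↦ x⁻¹`. -/
  inv : M → M
  /-- `D` contains all words of length at most `1`. -/
  mem_D_of_length_le_one : ∀ w : List M, w.length ≤ 1 → w ∈ D
  /-- (i) `Π [f] = f`. -/
  pi_single : ∀ f : M, pi [f] = f
  /-- (ii) if `u ++ v ∈ D` then `u ∈ D`. -/
  mem_D_of_append_left : ∀ u v : List M, u ++ v ∈ D → u ∈ D
  /-- (ii) if `u ++ v ∈ D` then `v ∈ D`. -/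
  mem_D_of_append_right : ∀ u v : List M, u ++ v ∈ D → v ∈ D
  /-- (iii) if `u ++ v ++ w ∈ D` then `u ++ [Π v] ++ w ∈ D`. -/
  mem_D_contract : ∀ u v w : List M, u ++ v ++ w ∈ D → u ++ [pi v] ++ w ∈ D
  /-- (iii) if `u ++ v ++ w ∈ D` then `Π (u ++ v ++ w) = Π (u ++ [Π v] ++ w)`. -/
  pi_contract : ∀ u v w : List M, u ++ v ++ w ∈ D → pi (u ++ v ++ w) = pi (u ++ [pi v] ++ w)
  /-- `inv` is an involution. -/
  inv_inv : ∀ x : M, inv (inv x) = x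
  /-- (iv) if `w ∈ D` then `w⁻¹ ++ w ∈ D`, where `w⁻¹` is the entrywise-inverted
  reverse of `w`. -/
  mem_D_inv_append : ∀ w ∈ D, (w.reverse.map inv) ++ w ∈ D
  /-- (iv) if `w ∈ D` then `Π (w⁻¹ ++ w) = 1 = Π []`. -/
  pi_inv_append : ∀ w ∈ D, pi ((w.reverse.map inv) ++ w) = pi []

/-- The formal inverse of a word: reverse it and invert each entry. -/
def PartialGroup.wInv {M : Type u} (P : PartialGroup M) (w : List M) : List M :=
  w.reverse.map P.inv

/-- The single-contraction relation `⇝` on words in a partial group: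
`u ++ [a, b] ++ v ⇝ u ++ [Π [a, b]] ++ v` whenever `[a, b] ∈ D`. -/
def PartialGroup.Contract {M : Type u} (P : PartialGroup M) (x y : List M) : Prop :=
  ∃ (u v : List M) (a b : M), [a, b] ∈ P.D ∧
    x = u ++ [a, b] ++ v ∧ y = u ++ [P.pi [a, b]] ++ v

/-- The reflexive–transitive closure `⇝*` of the single-contraction relation. -/
def PartialGroup.ContractStar {M : Type u} (P : PartialGroup M) : List M → List M → Prop :=
  Relation.ReflTransGen P.Contract

namespace PartialGroup
variable {M : Type u} (P : PartialGroup M)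

lemma contract_append (u v : List M) {x y : List M} (h : P.Contract x y) :
    P.Contract (u ++ x ++ v) (u ++ y ++ v) := by
  obtain ⟨u', v', a, b, hD, hx, hy⟩ := h
  exact ⟨u ++ u', v' ++ v, a, b, hD, by simp [hx], by simp [hy]⟩

lemma contractStar_append (u v : List M) {x y : List M} (h : P.ContractStar x y) :
    P.ContractStar (u ++ x ++ v) (u ++ y ++ v) := by
  induction h with
  | refl => exact .refl
  | tail _ hc ih => exact ih.tail (P.contract_append u v hc)

lemma contractStar_append_left (u : List M) {x y : List M} (h : P.ContractStar x y) :
    P.ContractStar (u ++ x) (u ++ y) := by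
  simpa using P.contractStar_append u [] h

lemma contractStar_append_right (v : List M) {x y : List M} (h : P.ContractStar x y) :
    P.ContractStar (x ++ v) (y ++ v) := by
  simpa using P.contractStar_append [] v h

lemma inv_pair_mem (a : M) : [P.inv a, a] ∈ P.D := by
  simpa using P.mem_D_inv_append [a] (P.mem_D_of_length_le_one [a] (by simp))

lemma inv_pair_pi (a : M) : P.pi [P.inv a, a] = P.pi [] := by
  simpa using P.pi_inv_append [a] (P.mem_D_of_length_le_one [a] (by simp))

lemma one_pair_mem (a : M) : [P.pi [], a] ∈ P.D := by
  simpa using P.mem_D_contract [] [] [a] (by simpa using P.mem_D_of_length_le_one [a] (by simp))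

lemma one_pair_pi (a : M) : P.pi [P.pi [], a] = a := by
  have := P.pi_contract [] [] [a] (by simpa using P.mem_D_of_length_le_one [a] (by simp))
  simp at this
  rw [← this, P.pi_single]

lemma pair_one_mem (a : M) : [a, P.pi []] ∈ P.D := by
  simpa using P.mem_D_contract [a] [] [] (by simpa using P.mem_D_of_length_le_one [a] (by simp))

lemma pair_one_pi (a : M) : P.pi [a, P.pi []] = a := by
  have := P.pi_contract [a] [] [] (by simpa using P.mem_D_of_length_le_one [a] (by simp))
  simp at this
  rw [← this, P.pi_single]

lemma wInv_wInv (y : List M) : P.wInv (P.wInv y) = y := by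
  have hid : P.inv ∘ P.inv = id := funext P.inv_inv
  simp [wInv, List.map_reverse, List.map_map, hid]

lemma wInv_ne_nil {y : List M} (hy : y ≠ []) : P.wInv y ≠ [] := by
  simp [wInv, hy]

lemma collapse : ∀ y : List M, y ≠ [] → P.ContractStar (P.wInv y ++ y) [P.pi []] := by
  intro y
  induction y with
  | nil => simp
  | cons a ys ih =>
    intro _
    have h1 : P.wInv (a :: ys) ++ (a :: ys) = P.wInv ys ++ [P.inv a, a] ++ ys := by
      simp [wInv]
    have step1 : P.Contract (P.wInv ys ++ [P.inv a, a] ++ ys)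
        (P.wInv ys ++ [P.pi []] ++ ys) := by
      refine ⟨P.wInv ys, ys, P.inv a, a, P.inv_pair_mem a, rfl, ?_⟩
      rw [P.inv_pair_pi a]
    rw [h1]
    cases ys with
    | nil => simpa [wInv, ContractStar] using Relation.ReflTransGen.single step1
    | cons b ys' =>
      refine Relation.ReflTransGen.head step1 ?_
      have step2 : P.Contract (P.wInv (b :: ys') ++ [P.pi [], b] ++ ys')
          (P.wInv (b :: ys') ++ [b] ++ ys') := by
        refine ⟨P.wInv (b :: ys'), ys', P.pi [], b, P.one_pair_mem b, rfl, ?_⟩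
        rw [P.one_pair_pi b]
      refine Relation.ReflTransGen.head (by simpa using step2) ?_
      simpa [ContractStar] using ih (by simp)

lemma one_append {w : List M} (hw : w ≠ []) : P.ContractStar ([P.pi []] ++ w) w := by
  cases w with
  | nil => exact absurd rfl hw
  | cons b w' =>
    refine Relation.ReflTransGen.single ⟨[], w', P.pi [], b, P.one_pair_mem b, rfl, ?_⟩
    simp [P.one_pair_pi b]

lemma append_one {w : List M} (hw : w ≠ []) : P.ContractStar (w ++ [P.pi []]) w := by
  obtain ⟨w₀, c, rfl⟩ := (List.eq_nil_or_concat w).resolve_left hw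
  refine Relation.ReflTransGen.single ⟨w₀, [], c, P.pi [], P.pair_one_mem c, by simp, ?_⟩
  rw [P.pair_one_pi c]
  simp

lemma contract_ne_nil {x y : List M} (h : P.Contract x y) : y ≠ [] := by
  obtain ⟨u, v, a, b, _, _, hy⟩ := h
  subst hy; simp

lemma contractStar_ne_nil {x y : List M} (h : P.ContractStar x y) (hx : x ≠ []) : y ≠ [] := by
  induction h with
  | refl => exact hx
  | tail _ hc _ => exact P.contract_ne_nil hc

lemma merge {w w' y : List M} (hw : w ≠ []) (hw' : w' ≠ []) (h1 : P.ContractStar w y)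
    (h2 : P.ContractStar w' y) :
    P.ContractStar (w ++ P.wInv y ++ w') w ∧ P.ContractStar (w ++ P.wInv y ++ w') w' := by
  have hy : y ≠ [] := P.contractStar_ne_nil h1 hw
  constructor
  · have a1 : P.ContractStar (w ++ P.wInv y ++ w') (w ++ (P.wInv y ++ y)) := by
      have := P.contractStar_append_left (w ++ P.wInv y) h2
      simpa [List.append_assoc] using this
    have a2 : P.ContractStar (w ++ (P.wInv y ++ y)) (w ++ [P.pi []]) :=
      P.contractStar_append_left w (P.collapse y hy)
    exact (a1.trans a2).trans (P.append_one hw)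
  · have b1 : P.ContractStar (w ++ P.wInv y ++ w') (y ++ P.wInv y ++ w') := by
      have := P.contractStar_append_right (P.wInv y ++ w') h1
      simpa [List.append_assoc] using this
    have b2 : P.ContractStar (y ++ P.wInv y ++ w') ([P.pi []] ++ w') := by
      have hcol := P.collapse (P.wInv y) (P.wInv_ne_nil hy)
      rw [P.wInv_wInv] at hcol
      exact P.contractStar_append_right w' hcol
    exact (b1.trans b2).trans (P.one_append hw')

end PartialGroup

/-- (One Mountain Theorem.)  If the singleton words `[f]` and `[g]` are related by the
equivalence relation generated by the single-contraction relation `⇝`, then there is a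
nonempty word `w` with `w ⇝* [f]` and `w ⇝* [g]`. -/
theorem one_mountain {M : Type u} (P : PartialGroup M) (f g : M)
    (h : Relation.EqvGen P.Contract [f] [g]) :
    ∃ w : List M, w ≠ [] ∧ P.ContractStar w [f] ∧ P.ContractStar w [g] := by
  suffices h' : ∀ x y : List M, Relation.EqvGen P.Contract x y →
      (x = [] ∧ y = []) ∨ ∃ w, w ≠ [] ∧ P.ContractStar w x ∧ P.ContractStar w y by
    rcases h' _ _ h with ⟨h1, _⟩ | ⟨w, hw, h1, h2⟩
    · simp at h1
    · exact ⟨w, hw, h1, h2⟩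
  intro x y hxy
  induction hxy with
  | rel x y hc =>
    right
    refine ⟨x, ?_, .refl, .single hc⟩
    obtain ⟨u, v, a, b, _, hx, _⟩ := hc
    subst hx; simp
  | refl x =>
    rcases eq_or_ne x [] with rfl | hx
    · exact Or.inl ⟨rfl, rfl⟩
    · exact Or.inr ⟨x, hx, .refl, .refl⟩
  | symm _ _ _ ih =>
    rcases ih with ⟨h1, h2⟩ | ⟨w, hw, h1, h2⟩
    · exact Or.inl ⟨h2, h1⟩
    · exact Or.inr ⟨w, hw, h2, h1⟩
  | trans x y z _ _ ih1 ih2 =>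
    rcases ih1 with ⟨rfl, rfl⟩ | ⟨w, hw, h1, h2⟩
    · rcases ih2 with ⟨_, rfl⟩ | ⟨w', hw', h1', h2'⟩
      · exact Or.inl ⟨rfl, rfl⟩
      · exact absurd rfl (P.contractStar_ne_nil h1' hw')
    · rcases ih2 with ⟨rfl, rfl⟩ | ⟨w', hw', h1', h2'⟩
      · exact absurd rfl (P.contractStar_ne_nil h2 hw)
      · right
        obtain ⟨m1, m2⟩ := P.merge hw hw' h2 h1'
        exact ⟨w ++ P.wInv y ++ w', by simp [hw], m1.trans h1, m2.trans h2'⟩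
end

section
/- A partial group M embeds in a group if and only if the canonical map η : M → G₀(M) to its enveloping presented group is injective. -/
/-- A partial group embeds in a group if there is a group `G` and an injective map
`φ : M → G` with `φ (Π w) = (w.map φ).prod` for every `w ∈ D`. -/
def PartialGroup.EmbedsInGroup {M : Type u} (P : PartialGroup M) : Prop :=
  ∃ (G : Type u) (_ : Group G) (φ : M → G), Function.Injective φ ∧
    ∀ w ∈ P.D, φ (P.pi w) = (w.map φ).prod

/-- The relators `a · b · (Π [a, b])⁻¹` for `[a, b] ∈ D` in the free group on `M`,
presenting the enveloping group `G₀(M)`. -/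
def PartialGroup.relators {M : Type u} (P : PartialGroup M) : Set (FreeGroup M) :=
  { r | ∃ a b : M, [a, b] ∈ P.D ∧
      r = FreeGroup.of a * FreeGroup.of b * (FreeGroup.of (P.pi [a, b]))⁻¹ }

/-- The enveloping presented group `G₀(M)` of a partial group. -/
def PartialGroup.envGroup {M : Type u} (P : PartialGroup M) : Type u :=
  PresentedGroup P.relators

instance {M : Type u} (P : PartialGroup M) : Group P.envGroup :=
  inferInstanceAs (Group (PresentedGroup P.relators))

/-- The canonical map `η : M → G₀(M)`. -/
def PartialGroup.eta {M : Type u} (P : PartialGroup M) : M → P.envGroup :=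
  PresentedGroup.of

lemma PartialGroup.eta_mul {M : Type u} (P : PartialGroup M) {a b : M}
    (h : [a, b] ∈ P.D) : P.eta (P.pi [a, b]) = P.eta a * P.eta b := by
  have hr : (P.eta a * P.eta b) * (P.eta (P.pi [a, b]))⁻¹ = 1 := by
    show (PresentedGroup.mk P.relators (FreeGroup.of a) *
        PresentedGroup.mk P.relators (FreeGroup.of b)) *
        (PresentedGroup.mk P.relators (FreeGroup.of (P.pi [a, b])))⁻¹ = 1
    rw [← map_mul, ← map_inv, ← map_mul]
    exact (QuotientGroup.eq_one_iff _).mpr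
      (Subgroup.subset_normalClosure ⟨a, b, h, rfl⟩)
  have := mul_eq_one_iff_eq_inv.mp hr
  simp at this
  exact this.symm

lemma PartialGroup.eta_one {M : Type u} (P : PartialGroup M) :
    P.eta (P.pi []) = 1 := by
  obtain ⟨x⟩ := P.nonempty
  have hx : ([x] : List M) ∈ P.D := P.mem_D_of_length_le_one _ (by simp)
  have hmem : ([P.pi [], x] : List M) ∈ P.D := by
    have := P.mem_D_contract [] [] [x] (by simpa using hx)
    simpa using this
  have hpi : P.pi [x] = P.pi [P.pi [], x] := by
    have := P.pi_contract [] [] [x] (by simpa using hx)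
    simpa using this
  have := P.eta_mul hmem
  rw [← hpi, P.pi_single] at this
  exact mul_right_cancel (by rw [← this, one_mul])

lemma PartialGroup.eta_pi {M : Type u} (P : PartialGroup M) :
    ∀ (n : ℕ) (w : List M), w.length ≤ n → w ∈ P.D →
      P.eta (P.pi w) = (w.map P.eta).prod := by
  intro n
  induction n with
  | zero =>
    intro w hw _
    rw [Nat.le_zero, List.length_eq_zero_iff] at hw
    subst hw
    simpa using P.eta_one
  | succ n ih =>
    intro w hw hD
    match w with
    | [] => simpa using P.eta_one
    | [a] => simp [P.pi_single]
    | a :: b :: t =>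
      have hab : ([a, b] : List M) ∈ P.D :=
        P.mem_D_of_append_left [a, b] t (by simpa using hD)
      have hpi : P.pi (a :: b :: t) = P.pi (P.pi [a, b] :: t) := by
        have := P.pi_contract [] [a, b] t (by simpa using hD)
        simpa using this
      have hmem : (P.pi [a, b] :: t) ∈ P.D := by
        have := P.mem_D_contract [] [a, b] t (by simpa using hD)
        simpa using this
      have hlen : (P.pi [a, b] :: t).length ≤ n := by
        simp at hw ⊢; omega
      rw [hpi, ih _ hlen hmem]
      simp [P.eta_mul hab, mul_assoc]

/-- A partial group embeds in a group if and only if the canonical map `η : M → G₀(M)`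
to its enveloping presented group is injective. -/
theorem embedsInGroup_iff_eta_injective {M : Type u} (P : PartialGroup M) :
    P.EmbedsInGroup ↔ Function.Injective P.eta := by
  constructor
  · rintro ⟨G, _, φ, hinj, hφ⟩
    have hrel : ∀ r ∈ P.relators, FreeGroup.lift φ r = 1 := by
      rintro r ⟨a, b, hab, rfl⟩
      have := hφ [a, b] hab
      simp at this
      simp [this, mul_assoc]
    have key : ∀ x : M, PresentedGroup.toGroup hrel (P.eta x) = φ x := fun x =>
      PresentedGroup.toGroup.of hrel
    intro x y hxy
    apply hinj
    rw [← key, ← key, hxy]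
  · intro hinj
    exact ⟨P.envGroup, inferInstance, P.eta, hinj, fun w hw =>
      P.eta_pi w.length w le_rfl hw⟩
end
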